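/- Let b > 0 and let S be a finite set of pairs (m,k) of integers with m ≥ 1 and k ≥ 1, with real coefficients a₁(m,k), a₂(m,k), a₃(m,k), a₄(m,k) for (m,k) ∈ S. Define α(x,y) = Σ_{(m,k)∈S} [ a₁ cos(mx/b)cos(ky) + a₂ cos(mx/b)sin(ky) + a₃ sin(mx/b)cos(ky) + a₄ sin(mx/b)sin(ky) ], ν(x,y) = Σ_{(m,k)∈S} (−i·k/(k² + (m/b)²))·[ a₁ cos(mx/b)sin(ky) − a₂ cos(mx/b)cos(ky) + a₃ sin(mx/b)sin(ky) − a₄ sin(mx/b)cos(ky) ], and p = (1/2)·∂ν/∂x − (i/2)·∂ν/∂y. Then Re ∫₀^{2πb} ∫₀^{2π} (1/2)·α(x,y)·p(x,y) dy dx = −(π²·b/4)·Σ_{(m,k)∈S} ( k²/(k² + (m/b)²) )·( a₁² + a₂² + a₃² + a₄² ); in particular this quantity is ≤ 0. -/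

import Mathlib

open Real intervalIntegral

lemma hasDerivAt_sin_lin (c t : ℝ) :
    HasDerivAt (fun s : ℝ => Real.sin (c * s)) (c * Real.cos (c * t)) t := by
  simpa [mul_comm] using ((hasDerivAt_id t).const_mul c).sin

lemma hasDerivAt_cos_lin (c t : ℝ) :
    HasDerivAt (fun s : ℝ => Real.cos (c * s)) (-(c * Real.sin (c * t))) t := by
  simpa [mul_comm] using ((hasDerivAt_id t).const_mul c).cos

lemma hasDerivAt_sin_div (r b t : ℝ) :
    HasDerivAt (fun s : ℝ => Real.sin (r * s / b)) (r / b * Real.cos (r * t / b)) t := by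
  have h1 : (fun s : ℝ => Real.sin (r * s / b)) = fun s : ℝ => Real.sin ((r / b) * s) := by
    funext s; congr 1; ring
  have h2 : r * t / b = (r / b) * t := by ring
  rw [h1, h2]; exact hasDerivAt_sin_lin (r / b) t

lemma hasDerivAt_cos_div (r b t : ℝ) :
    HasDerivAt (fun s : ℝ => Real.cos (r * s / b)) (-(r / b * Real.sin (r * t / b))) t := by
  have h1 : (fun s : ℝ => Real.cos (r * s / b)) = fun s : ℝ => Real.cos ((r / b) * s) := by
    funext s; congr 1; ring
  have h2 : r * t / b = (r / b) * t := by ring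
  rw [h1, h2]; exact hasDerivAt_cos_lin (r / b) t

noncomputable def Aq (b : ℝ) (a₁ a₂ a₃ a₄ : ℕ × ℕ → ℝ) (q : ℕ × ℕ) (x y : ℝ) : ℝ :=
  a₁ q * Real.cos (q.1 * x / b) * Real.cos (q.2 * y)
    + a₂ q * Real.cos (q.1 * x / b) * Real.sin (q.2 * y)
    + a₃ q * Real.sin (q.1 * x / b) * Real.cos (q.2 * y)
    + a₄ q * Real.sin (q.1 * x / b) * Real.sin (q.2 * y)

noncomputable def Bxq (b : ℝ) (a₁ a₂ a₃ a₄ : ℕ × ℕ → ℝ) (q : ℕ × ℕ) (x y : ℝ) : ℝ :=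
  ((q.1 : ℝ) / b) * (-(a₁ q) * Real.sin (q.1 * x / b) * Real.sin (q.2 * y)
    + a₂ q * Real.sin (q.1 * x / b) * Real.cos (q.2 * y)
    + a₃ q * Real.cos (q.1 * x / b) * Real.sin (q.2 * y)
    - a₄ q * Real.cos (q.1 * x / b) * Real.cos (q.2 * y))

noncomputable def rq (b : ℝ) (q : ℕ × ℕ) : ℝ := (q.2 : ℝ) / ((q.2 : ℝ) ^ 2 + ((q.1 : ℝ) / b) ^ 2)

lemma nu_deriv_x (b : ℝ) (S : Finset (ℕ × ℕ)) (a₁ a₂ a₃ a₄ : ℕ × ℕ → ℝ) (x y : ℝ) :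
    HasDerivAt (fun x' => ∑ q ∈ S,
      (-Complex.I * (q.2 : ℝ) / ((q.2 : ℝ) ^ 2 + ((q.1 : ℝ) / b) ^ 2)) *
        ((a₁ q * Real.cos (q.1 * x' / b) * Real.sin (q.2 * y)
          - a₂ q * Real.cos (q.1 * x' / b) * Real.cos (q.2 * y)
          + a₃ q * Real.sin (q.1 * x' / b) * Real.sin (q.2 * y)
          - a₄ q * Real.sin (q.1 * x' / b) * Real.cos (q.2 * y) : ℝ) : ℂ))
      (∑ q ∈ S, (-Complex.I * (q.2 : ℝ) / ((q.2 : ℝ) ^ 2 + ((q.1 : ℝ) / b) ^ 2)) *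
        ((Bxq b a₁ a₂ a₃ a₄ q x y : ℝ) : ℂ)) x := by
  refine HasDerivAt.fun_sum fun q hq => ?_
  have h1 := ((hasDerivAt_cos_div (q.1 : ℝ) b x).const_mul (a₁ q)).mul_const (Real.sin (q.2 * y))
  have h2 := ((hasDerivAt_cos_div (q.1 : ℝ) b x).const_mul (a₂ q)).mul_const (Real.cos (q.2 * y))
  have h3 := ((hasDerivAt_sin_div (q.1 : ℝ) b x).const_mul (a₃ q)).mul_const (Real.sin (q.2 * y))
  have h4 := ((hasDerivAt_sin_div (q.1 : ℝ) b x).const_mul (a₄ q)).mul_const (Real.cos (q.2 * y))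
  have h : HasDerivAt (fun x' => (a₁ q * Real.cos (q.1 * x' / b) * Real.sin (q.2 * y)
          - a₂ q * Real.cos (q.1 * x' / b) * Real.cos (q.2 * y)
          + a₃ q * Real.sin (q.1 * x' / b) * Real.sin (q.2 * y)
          - a₄ q * Real.sin (q.1 * x' / b) * Real.cos (q.2 * y) : ℝ))
      (Bxq b a₁ a₂ a₃ a₄ q x y) x := by
    refine (((h1.fun_sub h2).fun_add h3).fun_sub h4).congr_deriv ?_
    unfold Bxq; ring
  exact (h.ofReal_comp).const_mul _

lemma nu_deriv_y (b : ℝ) (S : Finset (ℕ × ℕ)) (a₁ a₂ a₃ a₄ : ℕ × ℕ → ℝ) (x y : ℝ) :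
    HasDerivAt (fun y' => ∑ q ∈ S,
      (-Complex.I * (q.2 : ℝ) / ((q.2 : ℝ) ^ 2 + ((q.1 : ℝ) / b) ^ 2)) *
        ((a₁ q * Real.cos (q.1 * x / b) * Real.sin (q.2 * y')
          - a₂ q * Real.cos (q.1 * x / b) * Real.cos (q.2 * y')
          + a₃ q * Real.sin (q.1 * x / b) * Real.sin (q.2 * y')
          - a₄ q * Real.sin (q.1 * x / b) * Real.cos (q.2 * y') : ℝ) : ℂ))
      (∑ q ∈ S, (-Complex.I * (q.2 : ℝ) / ((q.2 : ℝ) ^ 2 + ((q.1 : ℝ) / b) ^ 2)) *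
        (((q.2 : ℝ) * Aq b a₁ a₂ a₃ a₄ q x y : ℝ) : ℂ)) y := by
  refine HasDerivAt.fun_sum fun q hq => ?_
  have h1 := (hasDerivAt_sin_lin (q.2 : ℝ) y).const_mul (a₁ q * Real.cos (q.1 * x / b))
  have h2 := (hasDerivAt_cos_lin (q.2 : ℝ) y).const_mul (a₂ q * Real.cos (q.1 * x / b))
  have h3 := (hasDerivAt_sin_lin (q.2 : ℝ) y).const_mul (a₃ q * Real.sin (q.1 * x / b))
  have h4 := (hasDerivAt_cos_lin (q.2 : ℝ) y).const_mul (a₄ q * Real.sin (q.1 * x / b))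
  have h : HasDerivAt (fun y' => (a₁ q * Real.cos (q.1 * x / b) * Real.sin (q.2 * y')
          - a₂ q * Real.cos (q.1 * x / b) * Real.cos (q.2 * y')
          + a₃ q * Real.sin (q.1 * x / b) * Real.sin (q.2 * y')
          - a₄ q * Real.sin (q.1 * x / b) * Real.cos (q.2 * y') : ℝ))
      ((q.2 : ℝ) * Aq b a₁ a₂ a₃ a₄ q x y) y := by
    refine (((h1.fun_sub h2).fun_add h3).fun_sub h4).congr_deriv ?_
    unfold Aq; ring
  exact (h.ofReal_comp).const_mul _

lemma pull_sum (b : ℝ) (S : Finset (ℕ × ℕ)) (v : ℕ × ℕ → ℝ) :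
    ∑ q ∈ S, (-Complex.I * (q.2 : ℝ) / ((q.2 : ℝ) ^ 2 + ((q.1 : ℝ) / b) ^ 2)) * ((v q : ℝ) : ℂ)
      = -Complex.I * ((∑ q ∈ S, rq b q * v q : ℝ) : ℂ) := by
  push_cast
  rw [Finset.mul_sum]
  refine Finset.sum_congr rfl fun q hq => ?_
  unfold rq; push_cast; ring

lemma intC (b : ℝ) (hb : 0 < b) (n : ℤ) :
    ∫ x in (0:ℝ)..(2 * π * b), Real.cos ((n : ℝ) * x / b) =
      if n = 0 then 2 * π * b else 0 := by
  rcases eq_or_ne n 0 with h | h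
  · simp [h]
  · have hnb : ((n : ℝ) / b) ≠ 0 := by
      have : (n : ℝ) ≠ 0 := Int.cast_ne_zero.mpr h
      positivity
    have h1 : (fun x : ℝ => Real.cos ((n : ℝ) * x / b)) =
        fun x : ℝ => Real.cos (((n : ℝ) / b) * x) := by
      funext x; congr 1; ring
    rw [if_neg h, h1, intervalIntegral.integral_comp_mul_left _ hnb]
    have : ((n:ℝ)/b) * (2 * π * b) = (n : ℝ) * (2 * π) := by field_simp
    rw [this]
    rw [integral_cos]
    have : Real.sin ((n:ℝ) * (2 * π)) = 0 := by
      have := Real.sin_int_mul_pi (2 * n)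
      push_cast at this ⊢
      rw [show (n:ℝ) * (2 * π) = 2 * (n:ℝ) * π by ring]
      exact this
    simp [this]

lemma intS (b : ℝ) (hb : 0 < b) (n : ℤ) :
    ∫ x in (0:ℝ)..(2 * π * b), Real.sin ((n : ℝ) * x / b) = 0 := by
  rcases eq_or_ne n 0 with h | h
  · simp [h]
  · have hnb : ((n : ℝ) / b) ≠ 0 := by
      have : (n : ℝ) ≠ 0 := Int.cast_ne_zero.mpr h
      positivity
    have h1 : (fun x : ℝ => Real.sin ((n : ℝ) * x / b)) =
        fun x : ℝ => Real.sin (((n : ℝ) / b) * x) := by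
      funext x; congr 1; ring
    rw [h1, intervalIntegral.integral_comp_mul_left _ hnb]
    have : ((n:ℝ)/b) * (2 * π * b) = (n : ℝ) * (2 * π) := by field_simp
    rw [this]
    rw [integral_sin]
    have : Real.cos ((n:ℝ) * (2 * π)) = 1 := Real.cos_int_mul_two_pi n
    simp [this]

lemma ortho_cc (b : ℝ) (hb : 0 < b) (m m' : ℕ) (hm : 1 ≤ m) :
    ∫ x in (0:ℝ)..(2 * π * b), Real.cos ((m' : ℝ) * x / b) * Real.cos ((m : ℝ) * x / b) =
      if m' = m then π * b else 0 := by
  have hfun : (fun x : ℝ => Real.cos ((m' : ℝ) * x / b) * Real.cos ((m : ℝ) * x / b)) =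
      fun x : ℝ => (1/2) * Real.cos (((m' - m : ℤ) : ℝ) * x / b)
        + (1/2) * Real.cos (((m' + m : ℤ) : ℝ) * x / b) := by
    funext x; push_cast
    rw [show ((m' : ℝ) - m) * x / b = (m' : ℝ) * x / b - (m : ℝ) * x / b by ring,
      show ((m' : ℝ) + m) * x / b = (m' : ℝ) * x / b + (m : ℝ) * x / b by ring,
      Real.cos_sub, Real.cos_add]
    ring
  rw [hfun, intervalIntegral.integral_add (Continuous.intervalIntegrable (by fun_prop) _ _) (Continuous.intervalIntegrable (by fun_prop) _ _),
    intervalIntegral.integral_const_mul, intervalIntegral.integral_const_mul,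
    intC b hb (m' - m), intC b hb (m' + m)]
  have h2 : (m' + m : ℤ) ≠ 0 := by omega
  rcases eq_or_ne m' m with h | h
  · simp [h, h2, show m ≠ 0 by omega]; ring
  · have : (m' - m : ℤ) ≠ 0 := by omega
    simp [h, h2, this]

lemma ortho_ss (b : ℝ) (hb : 0 < b) (m m' : ℕ) (hm : 1 ≤ m) :
    ∫ x in (0:ℝ)..(2 * π * b), Real.sin ((m' : ℝ) * x / b) * Real.sin ((m : ℝ) * x / b) =
      if m' = m then π * b else 0 := by
  have hfun : (fun x : ℝ => Real.sin ((m' : ℝ) * x / b) * Real.sin ((m : ℝ) * x / b)) =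
      fun x : ℝ => (1/2) * Real.cos (((m' - m : ℤ) : ℝ) * x / b)
        + (-(1/2)) * Real.cos (((m' + m : ℤ) : ℝ) * x / b) := by
    funext x; push_cast
    rw [show ((m' : ℝ) - m) * x / b = (m' : ℝ) * x / b - (m : ℝ) * x / b by ring,
      show ((m' : ℝ) + m) * x / b = (m' : ℝ) * x / b + (m : ℝ) * x / b by ring,
      Real.cos_sub, Real.cos_add]
    ring
  rw [hfun, intervalIntegral.integral_add (Continuous.intervalIntegrable (by fun_prop) _ _) (Continuous.intervalIntegrable (by fun_prop) _ _),
    intervalIntegral.integral_const_mul, intervalIntegral.integral_const_mul,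
    intC b hb (m' - m), intC b hb (m' + m)]
  have h2 : (m' + m : ℤ) ≠ 0 := by omega
  rcases eq_or_ne m' m with h | h
  · simp [h, h2, show m ≠ 0 by omega]; ring
  · have : (m' - m : ℤ) ≠ 0 := by omega
    simp [h, h2, this]

lemma ortho_cs (b : ℝ) (hb : 0 < b) (m m' : ℕ) :
    ∫ x in (0:ℝ)..(2 * π * b), Real.cos ((m' : ℝ) * x / b) * Real.sin ((m : ℝ) * x / b) = 0 := by
  have hfun : (fun x : ℝ => Real.cos ((m' : ℝ) * x / b) * Real.sin ((m : ℝ) * x / b)) =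
      fun x : ℝ => (1/2) * Real.sin (((m + m' : ℤ) : ℝ) * x / b)
        + (1/2) * Real.sin (((m - m' : ℤ) : ℝ) * x / b) := by
    funext x; push_cast
    rw [show ((m : ℝ) + m') * x / b = (m : ℝ) * x / b + (m' : ℝ) * x / b by ring,
      show ((m : ℝ) - m') * x / b = (m : ℝ) * x / b - (m' : ℝ) * x / b by ring,
      Real.sin_sub, Real.sin_add]
    ring
  rw [hfun, intervalIntegral.integral_add (Continuous.intervalIntegrable (by fun_prop) _ _) (Continuous.intervalIntegrable (by fun_prop) _ _),
    intervalIntegral.integral_const_mul, intervalIntegral.integral_const_mul,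
    intS b hb (m + m'), intS b hb (m - m')]
  ring

lemma ortho_sc (b : ℝ) (hb : 0 < b) (m m' : ℕ) :
    ∫ x in (0:ℝ)..(2 * π * b), Real.sin ((m' : ℝ) * x / b) * Real.cos ((m : ℝ) * x / b) = 0 := by
  have := ortho_cs b hb m' m
  rw [← this]
  congr 1; funext x; ring

lemma x_int (b : ℝ) (hb : 0 < b) (m m' : ℕ) (hm : 1 ≤ m) (d1 d2 d3 d4 : ℝ) :
    ∫ x in (0:ℝ)..(2 * π * b),
      (d1 * (Real.cos ((m' : ℝ) * x / b) * Real.cos ((m : ℝ) * x / b))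
        + d2 * (Real.cos ((m' : ℝ) * x / b) * Real.sin ((m : ℝ) * x / b))
        + d3 * (Real.sin ((m' : ℝ) * x / b) * Real.cos ((m : ℝ) * x / b))
        + d4 * (Real.sin ((m' : ℝ) * x / b) * Real.sin ((m : ℝ) * x / b)))
      = (if m' = m then π * b else 0) * (d1 + d4) := by
  rw [intervalIntegral.integral_add (Continuous.intervalIntegrable (by fun_prop) _ _) (Continuous.intervalIntegrable (by fun_prop) _ _),
    intervalIntegral.integral_add (Continuous.intervalIntegrable (by fun_prop) _ _) (Continuous.intervalIntegrable (by fun_prop) _ _),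
    intervalIntegral.integral_add (Continuous.intervalIntegrable (by fun_prop) _ _) (Continuous.intervalIntegrable (by fun_prop) _ _),
    intervalIntegral.integral_const_mul, intervalIntegral.integral_const_mul,
    intervalIntegral.integral_const_mul, intervalIntegral.integral_const_mul,
    ortho_cc b hb m m' hm, ortho_ss b hb m m' hm, ortho_cs b hb m m', ortho_sc b hb m m']
  ring

lemma y_int (k k' : ℕ) (hk : 1 ≤ k) (c1 c2 c3 c4 : ℝ) :
    ∫ y in (0:ℝ)..(2 * π),
      (c1 * (Real.cos ((k' : ℝ) * y) * Real.cos ((k : ℝ) * y))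
        + c2 * (Real.cos ((k' : ℝ) * y) * Real.sin ((k : ℝ) * y))
        + c3 * (Real.sin ((k' : ℝ) * y) * Real.cos ((k : ℝ) * y))
        + c4 * (Real.sin ((k' : ℝ) * y) * Real.sin ((k : ℝ) * y)))
      = (if k' = k then π else 0) * (c1 + c4) := by
  have := x_int 1 one_pos k k' hk c1 c2 c3 c4
  simp only [div_one, mul_one] at this
  exact this

lemma AA_int (b : ℝ) (hb : 0 < b) (a₁ a₂ a₃ a₄ : ℕ × ℕ → ℝ) (q q' : ℕ × ℕ)
    (hm : 1 ≤ q.1) (hk : 1 ≤ q.2) :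
    (∫ x in (0:ℝ)..(2 * π * b), ∫ y in (0:ℝ)..(2 * π),
        Aq b a₁ a₂ a₃ a₄ q' x y * Aq b a₁ a₂ a₃ a₄ q x y)
      = if q' = q then π * π * b * (a₁ q ^ 2 + a₂ q ^ 2 + a₃ q ^ 2 + a₄ q ^ 2) else 0 := by
  have hy : ∀ x : ℝ, (∫ y in (0:ℝ)..(2 * π), Aq b a₁ a₂ a₃ a₄ q' x y * Aq b a₁ a₂ a₃ a₄ q x y)
      = (if q'.2 = q.2 then π else 0) *
        ((a₁ q' * Real.cos ((q'.1 : ℝ) * x / b) + a₃ q' * Real.sin ((q'.1 : ℝ) * x / b)) *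
          (a₁ q * Real.cos ((q.1 : ℝ) * x / b) + a₃ q * Real.sin ((q.1 : ℝ) * x / b))
        + (a₂ q' * Real.cos ((q'.1 : ℝ) * x / b) + a₄ q' * Real.sin ((q'.1 : ℝ) * x / b)) *
          (a₂ q * Real.cos ((q.1 : ℝ) * x / b) + a₄ q * Real.sin ((q.1 : ℝ) * x / b))) := by
    intro x
    rw [show (fun y => Aq b a₁ a₂ a₃ a₄ q' x y * Aq b a₁ a₂ a₃ a₄ q x y) = fun y =>
        ((a₁ q' * Real.cos ((q'.1 : ℝ) * x / b) + a₃ q' * Real.sin ((q'.1 : ℝ) * x / b)) *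
          (a₁ q * Real.cos ((q.1 : ℝ) * x / b) + a₃ q * Real.sin ((q.1 : ℝ) * x / b)))
            * (Real.cos ((q'.2 : ℝ) * y) * Real.cos ((q.2 : ℝ) * y))
        + ((a₁ q' * Real.cos ((q'.1 : ℝ) * x / b) + a₃ q' * Real.sin ((q'.1 : ℝ) * x / b)) *
          (a₂ q * Real.cos ((q.1 : ℝ) * x / b) + a₄ q * Real.sin ((q.1 : ℝ) * x / b)))
            * (Real.cos ((q'.2 : ℝ) * y) * Real.sin ((q.2 : ℝ) * y))
        + ((a₂ q' * Real.cos ((q'.1 : ℝ) * x / b) + a₄ q' * Real.sin ((q'.1 : ℝ) * x / b)) *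
          (a₁ q * Real.cos ((q.1 : ℝ) * x / b) + a₃ q * Real.sin ((q.1 : ℝ) * x / b)))
            * (Real.sin ((q'.2 : ℝ) * y) * Real.cos ((q.2 : ℝ) * y))
        + ((a₂ q' * Real.cos ((q'.1 : ℝ) * x / b) + a₄ q' * Real.sin ((q'.1 : ℝ) * x / b)) *
          (a₂ q * Real.cos ((q.1 : ℝ) * x / b) + a₄ q * Real.sin ((q.1 : ℝ) * x / b)))
            * (Real.sin ((q'.2 : ℝ) * y) * Real.sin ((q.2 : ℝ) * y))
      from funext fun y => by unfold Aq; ring]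
    rw [y_int q.2 q'.2 hk]
  rw [intervalIntegral.integral_congr (fun x _ => hy x), intervalIntegral.integral_const_mul]
  rw [show (fun x => ((a₁ q' * Real.cos ((q'.1 : ℝ) * x / b) + a₃ q' * Real.sin ((q'.1 : ℝ) * x / b)) *
          (a₁ q * Real.cos ((q.1 : ℝ) * x / b) + a₃ q * Real.sin ((q.1 : ℝ) * x / b))
        + (a₂ q' * Real.cos ((q'.1 : ℝ) * x / b) + a₄ q' * Real.sin ((q'.1 : ℝ) * x / b)) *
          (a₂ q * Real.cos ((q.1 : ℝ) * x / b) + a₄ q * Real.sin ((q.1 : ℝ) * x / b)))) = fun x =>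
        ((a₁ q' * a₁ q + a₂ q' * a₂ q) * (Real.cos ((q'.1 : ℝ) * x / b) * Real.cos ((q.1 : ℝ) * x / b))
        + (a₁ q' * a₃ q + a₂ q' * a₄ q) * (Real.cos ((q'.1 : ℝ) * x / b) * Real.sin ((q.1 : ℝ) * x / b))
        + (a₃ q' * a₁ q + a₄ q' * a₂ q) * (Real.sin ((q'.1 : ℝ) * x / b) * Real.cos ((q.1 : ℝ) * x / b))
        + (a₃ q' * a₃ q + a₄ q' * a₄ q) * (Real.sin ((q'.1 : ℝ) * x / b) * Real.sin ((q.1 : ℝ) * x / b)))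
      from funext fun x => by ring]
  rw [x_int b hb q.1 q'.1 hm]
  rcases eq_or_ne q' q with h | h
  · subst h; simp; ring
  · have h' : q'.1 ≠ q.1 ∨ q'.2 ≠ q.2 := by
      by_contra hc; push_neg at hc; exact h (Prod.ext hc.1 hc.2)
    rcases h' with h1 | h1 <;> simp [h, h1]
noncomputable def Uf (b : ℝ) (a₁ a₂ a₃ a₄ : ℕ × ℕ → ℝ) (S : Finset (ℕ × ℕ)) (x y : ℝ) : ℝ :=
  -(1/4) * ((∑ q' ∈ S, Aq b a₁ a₂ a₃ a₄ q' x y) *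
    (∑ q ∈ S, rq b q * ((q.2 : ℝ) * Aq b a₁ a₂ a₃ a₄ q x y)))

noncomputable def Wf (b : ℝ) (a₁ a₂ a₃ a₄ : ℕ × ℕ → ℝ) (S : Finset (ℕ × ℕ)) (x y : ℝ) : ℝ :=
  -(1/4) * ((∑ q' ∈ S, Aq b a₁ a₂ a₃ a₄ q' x y) *
    (∑ q ∈ S, rq b q * Bxq b a₁ a₂ a₃ a₄ q x y))

lemma combine (az ra rb : ℝ) (z₁ z₂ : ℂ) (h1 : z₁ = -Complex.I * ((rb : ℝ) : ℂ))
    (h2 : z₂ = -Complex.I * ((ra : ℝ) : ℂ)) :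
    (1 / 2 : ℂ) * ((az : ℝ) : ℂ) * ((1 / 2) * z₁ - (Complex.I / 2) * z₂)
      = ((-(1/4) * (az * ra) : ℝ) : ℂ) + Complex.I * ((-(1/4) * (az * rb) : ℝ) : ℂ) := by
  subst h1 h2
  push_cast
  linear_combination ((az : ℂ) * ra / 4) * Complex.I_sq

set_option maxHeartbeats 2000000 in
/-- The nonlocal term Re ∫ (1/2)·α·p of the second variation of
the conformal class has the explicit negative-semidefinite Fourier expression
−(π²b/4)·Σ k²/(k² + (m/b)²)·(a₁² + a₂² + a₃² + a₄²). -/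
theorem nonlocal_term_fourier_expression
    (b : ℝ) (hb : 0 < b)
    (S : Finset (ℕ × ℕ)) (hS : ∀ q ∈ S, 1 ≤ q.1 ∧ 1 ≤ q.2)
    (a₁ a₂ a₃ a₄ : ℕ × ℕ → ℝ)
    (α : ℝ → ℝ → ℝ)
    (hα : ∀ x y, α x y = ∑ q ∈ S,
      (a₁ q * Real.cos (q.1 * x / b) * Real.cos (q.2 * y)
        + a₂ q * Real.cos (q.1 * x / b) * Real.sin (q.2 * y)
        + a₃ q * Real.sin (q.1 * x / b) * Real.cos (q.2 * y)
        + a₄ q * Real.sin (q.1 * x / b) * Real.sin (q.2 * y)))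
    (ν : ℝ → ℝ → ℂ)
    (hν : ∀ x y, ν x y = ∑ q ∈ S,
      (-Complex.I * (q.2 : ℝ) / ((q.2 : ℝ) ^ 2 + ((q.1 : ℝ) / b) ^ 2)) *
        ((a₁ q * Real.cos (q.1 * x / b) * Real.sin (q.2 * y)
          - a₂ q * Real.cos (q.1 * x / b) * Real.cos (q.2 * y)
          + a₃ q * Real.sin (q.1 * x / b) * Real.sin (q.2 * y)
          - a₄ q * Real.sin (q.1 * x / b) * Real.cos (q.2 * y) : ℝ) : ℂ))
    (p : ℝ → ℝ → ℂ)
    (hp : ∀ x y, p x y = (1 / 2) * deriv (fun x' => ν x' y) x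
        - (Complex.I / 2) * deriv (fun y' => ν x y') y) :
    (∫ x in (0:ℝ)..(2 * π * b), ∫ y in (0:ℝ)..(2 * π),
        ((1 / 2 : ℂ) * ((α x y : ℝ) : ℂ) * p x y)).re
      = -(π ^ 2 * b / 4) * ∑ q ∈ S,
          ((q.2 : ℝ) ^ 2 / ((q.2 : ℝ) ^ 2 + ((q.1 : ℝ) / b) ^ 2)) *
            ((a₁ q) ^ 2 + (a₂ q) ^ 2 + (a₃ q) ^ 2 + (a₄ q) ^ 2) ∧
    (∫ x in (0:ℝ)..(2 * π * b), ∫ y in (0:ℝ)..(2 * π),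
        ((1 / 2 : ℂ) * ((α x y : ℝ) : ℂ) * p x y)).re ≤ 0 := by
  classical
  -- α as a sum of Aq
  have hα2 : ∀ x y, α x y = ∑ q' ∈ S, Aq b a₁ a₂ a₃ a₄ q' x y := by
    intro x y; rw [hα x y]; unfold Aq; rfl
  -- continuity facts
  have hcA : ∀ q : ℕ × ℕ, Continuous fun z : ℝ × ℝ => Aq b a₁ a₂ a₃ a₄ q z.1 z.2 := by
    intro q; unfold Aq; fun_prop
  have hcBx : ∀ q : ℕ × ℕ, Continuous fun z : ℝ × ℝ => Bxq b a₁ a₂ a₃ a₄ q z.1 z.2 := by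
    intro q; unfold Bxq; fun_prop
  have hcU : Continuous fun z : ℝ × ℝ => Uf b a₁ a₂ a₃ a₄ S z.1 z.2 := by
    unfold Uf
    exact continuous_const.mul ((continuous_finset_sum _ fun q _ => hcA q).mul
      (continuous_finset_sum _ fun q _ => continuous_const.mul (continuous_const.mul (hcA q))))
  have hcW : Continuous fun z : ℝ × ℝ => Wf b a₁ a₂ a₃ a₄ S z.1 z.2 := by
    unfold Wf
    exact continuous_const.mul ((continuous_finset_sum _ fun q _ => hcA q).mul
      (continuous_finset_sum _ fun q _ => continuous_const.mul (hcBx q)))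
  -- pointwise identity
  have hUW : ∀ x y, (1 / 2 : ℂ) * ((α x y : ℝ) : ℂ) * p x y
      = ((Uf b a₁ a₂ a₃ a₄ S x y : ℝ) : ℂ) + Complex.I * ((Wf b a₁ a₂ a₃ a₄ S x y : ℝ) : ℂ) := by
    intro x y
    rw [hp x y,
      show (fun x' => ν x' y) = _ from funext fun x' => hν x' y,
      show (fun y' => ν x y') = _ from funext fun y' => hν x y',
      (nu_deriv_x b S a₁ a₂ a₃ a₄ x y).deriv,
      (nu_deriv_y b S a₁ a₂ a₃ a₄ x y).deriv,
      hα2 x y]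
    unfold Uf Wf
    exact combine _ _ _ _ _ (pull_sum b S fun q => Bxq b a₁ a₂ a₃ a₄ q x y)
      (pull_sum b S fun q => (q.2 : ℝ) * Aq b a₁ a₂ a₃ a₄ q x y)
  -- reduce to the real double integral of Uf
  have h1 : ∀ x : ℝ, (∫ y in (0:ℝ)..(2 * π), (1 / 2 : ℂ) * ((α x y : ℝ) : ℂ) * p x y)
      = ((∫ y in (0:ℝ)..(2 * π), Uf b a₁ a₂ a₃ a₄ S x y : ℝ) : ℂ)
        + Complex.I * ((∫ y in (0:ℝ)..(2 * π), Wf b a₁ a₂ a₃ a₄ S x y : ℝ) : ℂ) := by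
    intro x
    rw [intervalIntegral.integral_congr (g := fun y =>
        ((Uf b a₁ a₂ a₃ a₄ S x y : ℝ) : ℂ) + Complex.I * ((Wf b a₁ a₂ a₃ a₄ S x y : ℝ) : ℂ))
      (fun y _ => hUW x y)]
    have hiU : IntervalIntegrable (fun y => ((Uf b a₁ a₂ a₃ a₄ S x y : ℝ) : ℂ))
        MeasureTheory.volume 0 (2 * π) :=
      Continuous.intervalIntegrable
        (by fun_prop) _ _
    have hiW : IntervalIntegrable (fun y => Complex.I * ((Wf b a₁ a₂ a₃ a₄ S x y : ℝ) : ℂ))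
        MeasureTheory.volume 0 (2 * π) :=
      Continuous.intervalIntegrable
        (by fun_prop) _ _
    rw [intervalIntegral.integral_add hiU hiW,
      intervalIntegral.integral_const_mul, intervalIntegral.integral_ofReal,
      intervalIntegral.integral_ofReal]
  have hPU : Continuous fun x => ∫ y in (0:ℝ)..(2 * π), Uf b a₁ a₂ a₃ a₄ S x y :=
    intervalIntegral.continuous_parametric_intervalIntegral_of_continuous'
      (μ := MeasureTheory.volume) (by fun_prop) 0 (2 * π)
  have hPW : Continuous fun x => ∫ y in (0:ℝ)..(2 * π), Wf b a₁ a₂ a₃ a₄ S x y :=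
    intervalIntegral.continuous_parametric_intervalIntegral_of_continuous'
      (μ := MeasureTheory.volume) (by fun_prop) 0 (2 * π)
  have h2 : (∫ x in (0:ℝ)..(2 * π * b), ∫ y in (0:ℝ)..(2 * π),
        ((1 / 2 : ℂ) * ((α x y : ℝ) : ℂ) * p x y))
      = ((∫ x in (0:ℝ)..(2 * π * b), ∫ y in (0:ℝ)..(2 * π), Uf b a₁ a₂ a₃ a₄ S x y : ℝ) : ℂ)
        + Complex.I * ((∫ x in (0:ℝ)..(2 * π * b), ∫ y in (0:ℝ)..(2 * π),
            Wf b a₁ a₂ a₃ a₄ S x y : ℝ) : ℂ) := by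
    rw [intervalIntegral.integral_congr (g := fun x =>
        ((∫ y in (0:ℝ)..(2 * π), Uf b a₁ a₂ a₃ a₄ S x y : ℝ) : ℂ)
          + Complex.I * ((∫ y in (0:ℝ)..(2 * π), Wf b a₁ a₂ a₃ a₄ S x y : ℝ) : ℂ))
      (fun x _ => h1 x)]
    have hiU : IntervalIntegrable
        (fun x => ((∫ y in (0:ℝ)..(2 * π), Uf b a₁ a₂ a₃ a₄ S x y : ℝ) : ℂ))
        MeasureTheory.volume 0 (2 * π * b) :=
      Continuous.intervalIntegrable (by fun_prop) _ _
    have hiW : IntervalIntegrable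
        (fun x => Complex.I * ((∫ y in (0:ℝ)..(2 * π), Wf b a₁ a₂ a₃ a₄ S x y : ℝ) : ℂ))
        MeasureTheory.volume 0 (2 * π * b) :=
      Continuous.intervalIntegrable (by fun_prop) _ _
    rw [intervalIntegral.integral_add hiU hiW,
      intervalIntegral.integral_const_mul, intervalIntegral.integral_ofReal,
      intervalIntegral.integral_ofReal]
  have hre : (∫ x in (0:ℝ)..(2 * π * b), ∫ y in (0:ℝ)..(2 * π),
        ((1 / 2 : ℂ) * ((α x y : ℝ) : ℂ) * p x y)).re
      = ∫ x in (0:ℝ)..(2 * π * b), ∫ y in (0:ℝ)..(2 * π), Uf b a₁ a₂ a₃ a₄ S x y := by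
    rw [h2]; simp
  -- compute the double integral of Uf
  have hU2 : ∀ x y, Uf b a₁ a₂ a₃ a₄ S x y = ∑ q' ∈ S, ∑ q ∈ S,
      (-(1/4) * (rq b q * (q.2 : ℝ))) * (Aq b a₁ a₂ a₃ a₄ q' x y * Aq b a₁ a₂ a₃ a₄ q x y) := by
    intro x y; unfold Uf
    rw [Finset.sum_mul_sum, Finset.mul_sum]
    refine Finset.sum_congr rfl fun q' _ => ?_
    rw [Finset.mul_sum]
    exact Finset.sum_congr rfl fun q _ => by ring
  have hAy : ∀ (q q' : ℕ × ℕ) (x : ℝ),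
      Continuous fun y => Aq b a₁ a₂ a₃ a₄ q' x y * Aq b a₁ a₂ a₃ a₄ q x y := by
    intro q q' x
    have h1 := hcA q'
    have h2 := hcA q
    fun_prop
  have hyint : ∀ x : ℝ, (∫ y in (0:ℝ)..(2 * π), Uf b a₁ a₂ a₃ a₄ S x y)
      = ∑ q' ∈ S, ∑ q ∈ S, (-(1/4) * (rq b q * (q.2 : ℝ)))
          * ∫ y in (0:ℝ)..(2 * π), Aq b a₁ a₂ a₃ a₄ q' x y * Aq b a₁ a₂ a₃ a₄ q x y := by
    intro x
    rw [intervalIntegral.integral_congr (fun y _ => hU2 x y),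
      intervalIntegral.integral_finset_sum (fun q' _ =>
        (Continuous.intervalIntegrable (continuous_finset_sum _ fun q _ =>
          (continuous_const.fun_mul (hAy q q' x))) _ _))]
    refine Finset.sum_congr rfl fun q' _ => ?_
    rw [intervalIntegral.integral_finset_sum (fun q _ =>
        (Continuous.intervalIntegrable (continuous_const.fun_mul (hAy q q' x)) _ _))]
    exact Finset.sum_congr rfl fun q _ => intervalIntegral.integral_const_mul _ _
  have hGx : ∀ q q' : ℕ × ℕ,
      Continuous fun x => ∫ y in (0:ℝ)..(2 * π), Aq b a₁ a₂ a₃ a₄ q' x y * Aq b a₁ a₂ a₃ a₄ q x y :=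
    fun q q' => intervalIntegral.continuous_parametric_intervalIntegral_of_continuous'
      (μ := MeasureTheory.volume) (by fun_prop) 0 (2 * π)
  have hval : (∫ x in (0:ℝ)..(2 * π * b), ∫ y in (0:ℝ)..(2 * π), Uf b a₁ a₂ a₃ a₄ S x y)
      = -(π ^ 2 * b / 4) * ∑ q ∈ S,
          ((q.2 : ℝ) ^ 2 / ((q.2 : ℝ) ^ 2 + ((q.1 : ℝ) / b) ^ 2)) *
            ((a₁ q) ^ 2 + (a₂ q) ^ 2 + (a₃ q) ^ 2 + (a₄ q) ^ 2) := by
    rw [intervalIntegral.integral_congr (fun x _ => hyint x),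
      intervalIntegral.integral_finset_sum (fun q' _ =>
        (Continuous.intervalIntegrable (continuous_finset_sum _ fun q _ =>
          (continuous_const.fun_mul (hGx q q'))) _ _))]
    rw [Finset.mul_sum]
    refine Finset.sum_congr rfl fun q' hq' => ?_
    rw [intervalIntegral.integral_finset_sum (fun q _ =>
        (Continuous.intervalIntegrable (continuous_const.fun_mul (hGx q q')) _ _))]
    have hstep : ∀ q ∈ S, (∫ x in (0:ℝ)..(2 * π * b), (-(1/4) * (rq b q * (q.2 : ℝ)))
          * ∫ y in (0:ℝ)..(2 * π), Aq b a₁ a₂ a₃ a₄ q' x y * Aq b a₁ a₂ a₃ a₄ q x y)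
        = (-(1/4) * (rq b q * (q.2 : ℝ))) *
            (if q' = q then π * π * b * (a₁ q ^ 2 + a₂ q ^ 2 + a₃ q ^ 2 + a₄ q ^ 2) else 0) := by
      intro q hq
      rw [intervalIntegral.integral_const_mul,
        AA_int b hb a₁ a₂ a₃ a₄ q q' (hS q hq).1 (hS q hq).2]
    rw [Finset.sum_congr rfl hstep]
    rw [Finset.sum_eq_single_of_mem q' hq' (fun q hq hne => by
      rw [if_neg (fun h => hne h.symm), mul_zero])]
    rw [if_pos rfl]
    unfold rq; ring
  constructor
  · rw [hre, hval]
  · rw [hre, hval]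
    have hsum : 0 ≤ ∑ q ∈ S,
        ((q.2 : ℝ) ^ 2 / ((q.2 : ℝ) ^ 2 + ((q.1 : ℝ) / b) ^ 2)) *
          ((a₁ q) ^ 2 + (a₂ q) ^ 2 + (a₃ q) ^ 2 + (a₄ q) ^ 2) := by
      refine Finset.sum_nonneg fun q hq => mul_nonneg (div_nonneg (sq_nonneg _) ?_) (by positivity)
      positivity
    have hc : -(π ^ 2 * b / 4) ≤ 0 := by
      have : (0:ℝ) ≤ π ^ 2 * b / 4 := by positivity
      linarith
    exact mul_nonpos_iff.mpr (Or.inr ⟨hc, hsum⟩)
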